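/- Let $d \ge 1$ and let $A \subseteq \mathbb{Z}^d \times \{0,1,2,\dots\} \subseteq \mathbb{Z}^{d+1}$ be a finite, non-empty, $\mathcal{L}$-connected set. Then $|\partial_{ext}A| \le 6\,|\partial_{ext}^{+}A|$. -/

import Mathlib

/-- Two points of `ℤ^D` are `ℒ`-adjacent if they are distinct and within `ℓ^∞` distance 1. -/
def LAdj {D : ℕ} (v w : Fin D → ℤ) : Prop := v ≠ w ∧ ∀ i, |v i - w i| ≤ 1

/-- Two points of `ℤ^D` are nearest-neighbor adjacent if they are at `ℓ^1` distance 1. -/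
def NNAdj {D : ℕ} (v w : Fin D → ℤ) : Prop := (∑ i, |v i - w i|) = 1

/-- A set `A` is connected for the adjacency relation `adj`: any two of its points are joined
by a path staying inside `A`. -/
def ConnectedIn {α : Type*} (adj : α → α → Prop) (A : Set α) : Prop :=
  ∀ x ∈ A, ∀ y ∈ A, Relation.ReflTransGen (fun a b => a ∈ A ∧ b ∈ A ∧ adj a b) x y

/-- A sequence eventually leaves every finite set. -/
def EscapesToInfinity {α : Type*} (γ : ℕ → α) : Prop :=
  ∀ F : Set α, F.Finite → ∃ N, ∀ n, N ≤ n → γ n ∉ F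

/-- A nearest-neighbor path to infinity. -/
def NNPathToInfinity {D : ℕ} (γ : ℕ → Fin D → ℤ) : Prop :=
  (∀ n, NNAdj (γ n) (γ (n + 1))) ∧ EscapesToInfinity γ

/-- The exterior boundary of `A`: points outside `A`, `ℒ`-adjacent to `A`, from which a
nearest-neighbor path to infinity avoiding `A` exists. -/
def extBdry {D : ℕ} (A : Set (Fin D → ℤ)) : Set (Fin D → ℤ) :=
  {v | v ∉ A ∧ (∃ w ∈ A, LAdj v w) ∧
    ∃ γ : ℕ → Fin D → ℤ, γ 0 = v ∧ NNPathToInfinity γ ∧ ∀ n, γ n ∉ A}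

/-- `S` separates `A` from infinity: `S` is disjoint from `A` and every nearest-neighbor path
from `A` to infinity meets `S`. -/
def Separates {D : ℕ} (S A : Set (Fin D → ℤ)) : Prop :=
  S ∩ A = ∅ ∧ ∀ γ : ℕ → Fin D → ℤ, γ 0 ∈ A → NNPathToInfinity γ → ∃ n, γ n ∈ S

/-- `(w, v)` is a `𝒟`-edge: the last coordinate increases by 1 and the first `d` coordinates
change by at most 1 each. -/
def DEdge {d : ℕ} (w v : Fin (d + 1) → ℤ) : Prop :=
  v (Fin.last d) = w (Fin.last d) + 1 ∧ ∀ i : Fin d, |v i.castSucc - w i.castSucc| ≤ 1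

/-- The part `∂⁺_ext A` of the exterior boundary reachable from `A` by a `𝒟`-edge. -/
def extBdryPlus {d : ℕ} (A : Set (Fin (d + 1) → ℤ)) : Set (Fin (d + 1) → ℤ) :=
  {v ∈ extBdry A | ∃ w ∈ A, DEdge w v}

namespace GH6

variable {d : ℕ}

/-- Shift a point upward by `k` in the last coordinate. -/
def up (v : Fin (d + 1) → ℤ) (k : ℕ) : Fin (d + 1) → ℤ :=
  fun i => if i = Fin.last d then v i + k else v i

@[simp] lemma up_last (v : Fin (d + 1) → ℤ) (k : ℕ) :
    up v k (Fin.last d) = v (Fin.last d) + k := by simp [up]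

lemma up_ne_last (v : Fin (d + 1) → ℤ) (k : ℕ) {i : Fin (d + 1)} (h : i ≠ Fin.last d) :
    up v k i = v i := by simp [up, h]

@[simp] lemma up_zero (v : Fin (d + 1) → ℤ) : up v 0 = v := by
  funext i; simp [up]

lemma up_up (v : Fin (d + 1) → ℤ) (a b : ℕ) : up (up v a) b = up v (a + b) := by
  funext i
  by_cases h : i = Fin.last d
  · simp [up, h]; ring
  · simp [up, h]

lemma nnadj_up_succ (v : Fin (d + 1) → ℤ) (k : ℕ) : NNAdj (up v k) (up v (k + 1)) := by
  unfold NNAdj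
  rw [Fintype.sum_eq_single (Fin.last d) (fun i hi => by
    rw [up_ne_last _ _ hi, up_ne_last _ _ hi]; simp)]
  rw [up_last, up_last]
  push_cast; ring_nf
  simp

lemma nnadj_symm {D : ℕ} {v w : Fin D → ℤ} (h : NNAdj v w) : NNAdj w v := by
  unfold NNAdj at h ⊢
  rw [← h]
  exact Finset.sum_congr rfl fun i _ => abs_sub_comm _ _

/-- Escape from `p`: a nearest-neighbor path to infinity starting at `p` avoiding `A`. -/
def EscapeFrom (A : Set (Fin (d + 1) → ℤ)) (p : Fin (d + 1) → ℤ) : Prop :=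
  ∃ γ : ℕ → Fin (d + 1) → ℤ, γ 0 = p ∧ NNPathToInfinity γ ∧ ∀ n, γ n ∉ A

lemma escapeFrom_prepend {A : Set (Fin (d + 1) → ℤ)} (x : ℕ → Fin (d + 1) → ℤ) (r : ℕ)
    (hadj : ∀ n, n < r → NNAdj (x n) (x (n + 1)))
    (hA : ∀ n, n ≤ r → x n ∉ A)
    (h : EscapeFrom A (x r)) : EscapeFrom A (x 0) := by
  obtain ⟨γ, hγ0, ⟨hstep, hesc⟩, hγA⟩ := h
  refine ⟨fun n => if n < r then x n else γ (n - r), ?_, ⟨?_, ?_⟩, ?_⟩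
  · by_cases h0 : 0 < r
    · simp [h0]
    · have hr : r = 0 := by omega
      simp [hr, hγ0]
  · intro n
    by_cases h1 : n + 1 < r
    · have h2 : n < r := by omega
      simpa [h1, h2] using hadj n h2
    · by_cases h2 : n < r
      · have h3 : n + 1 - r = 0 := by omega
        simp only [if_pos h2, if_neg h1, h3, hγ0]
        have h4 : r = n + 1 := by omega
        rw [h4]
        exact hadj n h2
      · have h3 : n + 1 - r = (n - r) + 1 := by omega
        simp only [if_neg h2, if_neg h1, h3]
        exact hstep (n - r)
  · intro F hF
    obtain ⟨N, hN⟩ := hesc F hF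
    refine ⟨N + r, fun n hn => ?_⟩
    have h2 : ¬ n < r := by omega
    simp only [if_neg h2]
    exact hN _ (by omega)
  · intro n
    by_cases h2 : n < r
    · simp only [if_pos h2]; exact hA n (le_of_lt h2)
    · simp only [if_neg h2]; exact hγA _


lemma dedge_up_succ (v : Fin (d + 1) → ℤ) (k : ℕ) : DEdge (up v k) (up v (k + 1)) := by
  constructor
  · rw [up_last, up_last]; push_cast; ring
  · intro i
    have hi : i.castSucc ≠ Fin.last d := (Fin.castSucc_lt_last i).ne
    rw [up_ne_last _ _ hi, up_ne_last _ _ hi]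
    simp

lemma escapeFrom_of_column_free {A : Set (Fin (d + 1) → ℤ)} {v : Fin (d + 1) → ℤ}
    (h : ∀ j : ℕ, up v j ∉ A) : EscapeFrom A v := by
  refine ⟨fun n => up v n, up_zero v, ⟨fun n => nnadj_up_succ v n, ?_⟩, h⟩
  intro F hF
  obtain ⟨b, hb⟩ := (hF.image (fun x => x (Fin.last d))).bddAbove
  refine ⟨(b - v (Fin.last d)).toNat + 1, fun n hn hmem => ?_⟩
  have h1 : up v n (Fin.last d) ≤ b := hb (Set.mem_image_of_mem _ hmem)
  rw [up_last] at h1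
  have h2 := Int.self_le_toNat (b - v (Fin.last d))
  omega

/-- Escape from a point `m` above `v`, descending to `v` and using `v`'s escape path. -/
lemma escapeFrom_up {A : Set (Fin (d + 1) → ℤ)} {v : Fin (d + 1) → ℤ} (m : ℕ)
    (hA : ∀ j : ℕ, 1 ≤ j → j ≤ m → up v j ∉ A) (hv : v ∉ A)
    (hesc : EscapeFrom A v) : EscapeFrom A (up v m) := by
  have h := escapeFrom_prepend (A := A) (fun n => up v (m - n)) m ?_ ?_ ?_
  · simpa using h
  · intro n hn
    have h1 : m - n = (m - (n + 1)) + 1 := by omega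
    simp only [h1]
    exact nnadj_symm (nnadj_up_succ v _)
  · intro n hn
    by_cases h : n = m
    · simpa [h] using hv
    · exact hA (m - n) (by omega) (by omega)
  · simpa using hesc

/-- Escape from a point `a` below `m` above `v`, ascending to `up v m`. -/
lemma escapeFrom_down {A : Set (Fin (d + 1) → ℤ)} {v : Fin (d + 1) → ℤ} {a m : ℕ} (ham : a ≤ m)
    (hA : ∀ j : ℕ, a ≤ j → j ≤ m → up v j ∉ A)
    (hesc : EscapeFrom A (up v m)) : EscapeFrom A (up v a) := by
  have h := escapeFrom_prepend (A := A) (fun n => up v (min (a + n) m)) (m - a) ?_ ?_ ?_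
  · have h0 : (a + 0) ⊓ m = a := by omega
    simpa only [h0] using h
  · intro n hn
    have h1 : (a + n) ⊓ m = a + n := by omega
    have h2 : (a + (n + 1)) ⊓ m = (a + n) + 1 := by omega
    simp only [h1, h2]
    exact nnadj_up_succ v _
  · intro n hn
    exact hA _ (by omega) (by omega)
  · have h1 : (a + (m - a)) ⊓ m = m := by omega
    simpa only [h1] using hesc

lemma mem_plus {A : Set (Fin (d + 1) → ℤ)} {u w : Fin (d + 1) → ℤ} (hw : w ∈ A) (hu : u ∉ A)
    (hD : DEdge w u) (hesc : EscapeFrom A u) : u ∈ extBdryPlus A := by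
  have hL : LAdj u w := by
    refine ⟨fun he => hu (he ▸ hw), fun i => ?_⟩
    rcases Fin.eq_castSucc_or_eq_last i with ⟨j, rfl⟩ | rfl
    · exact hD.2 j
    · rw [hD.1]; simp
  exact ⟨⟨hu, ⟨w, hw, hL⟩, hesc⟩, w, hw, hD⟩


lemma not_dedge_of_not_plus {A : Set (Fin (d + 1) → ℤ)} {v : Fin (d + 1) → ℤ}
    (hv : v ∈ extBdry A) (hnp : v ∉ extBdryPlus A) : ∀ w ∈ A, ¬ DEdge w v :=
  fun w hw hD => hnp ⟨hv, w, hw, hD⟩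

/-- L1: above every boundary point that is not a plus point there is a plus point. -/
lemma exists_plus_above {A : Set (Fin (d + 1) → ℤ)} (hfin : A.Finite) {v : Fin (d + 1) → ℤ}
    (hv : v ∈ extBdry A) (hnp : v ∉ extBdryPlus A) :
    ∃ m : ℕ, 1 ≤ m ∧ up v m ∈ extBdryPlus A := by
  obtain ⟨hvA, ⟨w, hw, hL⟩, hesc⟩ := hv
  have hesc' : EscapeFrom A v := hesc
  have hnD : ∀ w' ∈ A, ¬ DEdge w' v :=
    not_dedge_of_not_plus ⟨hvA, ⟨w, hw, hL⟩, hesc⟩ hnp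
  by_cases hS : ∃ k : ℕ, 1 ≤ k ∧ up v k ∈ A
  · -- the column above `v` meets `A`; go to just above its top point
    have hinj : Function.Injective (fun k : ℕ => up v k) := by
      intro a b hab
      have h2 := congrFun hab (Fin.last d)
      simp only [up_last] at h2
      omega
    have hfinS : {k : ℕ | 1 ≤ k ∧ up v k ∈ A}.Finite := by
      apply Set.Finite.subset (hfin.preimage hinj.injOn)
      intro k hk
      exact hk.2
    obtain ⟨k0, hk0⟩ := hS
    have hTne : hfinS.toFinset.Nonempty := ⟨k0, hfinS.mem_toFinset.mpr hk0⟩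
    set M := hfinS.toFinset.max' hTne with hMdef
    have hMS : 1 ≤ M ∧ up v M ∈ A :=
      hfinS.mem_toFinset.mp (hfinS.toFinset.max'_mem hTne)
    have hMax : ∀ k : ℕ, 1 ≤ k → up v k ∈ A → k ≤ M := by
      intro k h1 h2
      exact hfinS.toFinset.le_max' k (hfinS.mem_toFinset.mpr ⟨h1, h2⟩)
    have hnotA : ∀ j : ℕ, up (up v (M + 1)) j ∉ A := by
      intro j hmem
      rw [up_up] at hmem
      have := hMax _ (by omega) hmem
      omega
    have huA : up v (M + 1) ∉ A := by
      have := hnotA 0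
      rwa [up_zero] at this
    refine ⟨M + 1, by omega, mem_plus hMS.2 huA (dedge_up_succ v M)
      (escapeFrom_of_column_free hnotA)⟩
  · push_neg at hS
    have hS' : ∀ k : ℕ, 1 ≤ k → up v k ∉ A := hS
    have h1 := hL.2 (Fin.last d)
    have habs := abs_le.mp h1
    have hne : w (Fin.last d) ≠ v (Fin.last d) - 1 := by
      intro he
      exact hnD w hw ⟨by omega, fun i => hL.2 i.castSucc⟩
    have hcs : ∀ i : Fin d, ∀ k : ℕ,
        |up v k i.castSucc - w i.castSucc| ≤ 1 := by
      intro i k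
      rw [up_ne_last _ _ (Fin.castSucc_lt_last i).ne]
      exact hL.2 i.castSucc
    have hdisj : w (Fin.last d) = v (Fin.last d) ∨
        w (Fin.last d) = v (Fin.last d) + 1 := by omega
    rcases hdisj with he | he
    · refine ⟨1, le_rfl, mem_plus hw (hS' 1 le_rfl) ⟨by rw [up_last]; omega, (fun i => hcs i _)⟩ ?_⟩
      exact escapeFrom_up 1 (fun j hj1 hj2 => by
        have : j = 1 := by omega
        subst this; exact hS' 1 le_rfl) hvA hesc'
    · refine ⟨2, by omega, mem_plus hw (hS' 2 (by omega)) ⟨by rw [up_last]; omega, (fun i => hcs i _)⟩ ?_⟩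
      exact escapeFrom_up 2 (fun j hj1 hj2 => hS' j hj1) hvA hesc'

/-- L2: between two vertically aligned non-plus boundary points at distance ≥ 2
there is a plus point strictly between. -/
lemma exists_plus_between {A : Set (Fin (d + 1) → ℤ)} {v : Fin (d + 1) → ℤ} {m : ℕ}
    (hm : 2 ≤ m)
    (hv : v ∈ extBdry A) (hnp : v ∉ extBdryPlus A)
    (hv' : up v m ∈ extBdry A) (hnp' : up v m ∉ extBdryPlus A) :
    ∃ j : ℕ, 1 ≤ j ∧ j < m ∧ up v j ∈ extBdryPlus A := by
  have hvA : v ∉ A := hv.1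
  have hvmA : up v m ∉ A := hv'.1
  have hescv : EscapeFrom A v := hv.2.2
  have hescvm : EscapeFrom A (up v m) := hv'.2.2
  -- the point just below `up v m` is not in `A`
  have hm1A : up v (m - 1) ∉ A := by
    intro hmem
    apply not_dedge_of_not_plus hv' hnp' (up v (m - 1)) hmem
    have h := dedge_up_succ v (m - 1)
    have h2 : m - 1 + 1 = m := by omega
    rwa [h2] at h
  by_cases hT : ∃ k : ℕ, 1 ≤ k ∧ k < m ∧ up v k ∈ A
  · -- there is a column point of `A` strictly between; take the top one
    have hfinT : {k : ℕ | 1 ≤ k ∧ k < m ∧ up v k ∈ A}.Finite :=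
      Set.Finite.subset (Set.finite_Iio m) (fun k hk => hk.2.1)
    obtain ⟨k0, hk0⟩ := hT
    have hTne : hfinT.toFinset.Nonempty := ⟨k0, hfinT.mem_toFinset.mpr hk0⟩
    set L := hfinT.toFinset.max' hTne with hLdef
    have hLS : 1 ≤ L ∧ L < m ∧ up v L ∈ A :=
      hfinT.mem_toFinset.mp (hfinT.toFinset.max'_mem hTne)
    have hMax : ∀ k : ℕ, 1 ≤ k → k < m → up v k ∈ A → k ≤ L := by
      intro k h1 h2 h3
      exact hfinT.toFinset.le_max' k (hfinT.mem_toFinset.mpr ⟨h1, h2, h3⟩)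
    have hLm : L + 1 < m := by
      rcases Nat.lt_or_ge (L + 1) m with h | h
      · exact h
      · exfalso
        have : L = m - 1 := by omega
        rw [this] at hLS
        exact hm1A hLS.2.2
    have hmid : ∀ j : ℕ, L + 1 ≤ j → j ≤ m → up v j ∉ A := by
      intro j hj1 hj2 hmem
      rcases Nat.lt_or_ge j m with h | h
      · have := hMax j (by omega) h hmem
        omega
      · have : j = m := by omega
        rw [this] at hmem
        exact hvmA hmem
    have huA : up v (L + 1) ∉ A := hmid (L + 1) le_rfl (by omega)
    exact ⟨L + 1, by omega, hLm,
      mem_plus hLS.2.2 huA (dedge_up_succ v L) (escapeFrom_down (by omega) hmid hescvm)⟩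
  · push_neg at hT
    have hT' : ∀ k : ℕ, 1 ≤ k → k < m → up v k ∉ A := hT
    obtain ⟨w, hw, hL⟩ := hv.2.1
    have hnD : ∀ w' ∈ A, ¬ DEdge w' v := not_dedge_of_not_plus hv hnp
    have h1 := hL.2 (Fin.last d)
    have habs := abs_le.mp h1
    have hne : w (Fin.last d) ≠ v (Fin.last d) - 1 := by
      intro he
      exact hnD w hw ⟨by omega, fun i => hL.2 i.castSucc⟩
    have hcs : ∀ i : Fin d, ∀ k : ℕ,
        |up v k i.castSucc - w i.castSucc| ≤ 1 := by
      intro i k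
      rw [up_ne_last _ _ (Fin.castSucc_lt_last i).ne]
      exact hL.2 i.castSucc
    have hdisj : w (Fin.last d) = v (Fin.last d) ∨
        w (Fin.last d) = v (Fin.last d) + 1 := by omega
    rcases hdisj with he | he
    · refine ⟨1, le_rfl, by omega,
        mem_plus hw (hT' 1 le_rfl (by omega)) ⟨by rw [up_last]; omega, (fun i => hcs i _)⟩ ?_⟩
      exact escapeFrom_up 1 (fun j hj1 hj2 => by
        have : j = 1 := by omega
        subst this; exact hT' 1 le_rfl (by omega)) hvA hescv
    · have hm3 : 3 ≤ m := by
        rcases Nat.lt_or_ge m 3 with h | h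
        · exfalso
          have hm2 : m = 2 := by omega
          apply not_dedge_of_not_plus hv' hnp' w hw
          exact ⟨by rw [up_last]; omega, fun i => by
            rw [up_ne_last _ _ (Fin.castSucc_lt_last i).ne]; exact hL.2 i.castSucc⟩
        · exact h
      refine ⟨2, by omega, by omega,
        mem_plus hw (hT' 2 (by omega) (by omega)) ⟨by rw [up_last]; omega, (fun i => hcs i _)⟩ ?_⟩
      exact escapeFrom_up 2 (fun j hj1 hj2 => hT' j hj1 (by omega)) hvA hescv

end GH6

open GH6

/-- Lemma 5, second part: for a finite nonempty `ℒ`-connected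
`A ⊆ ℤ^d × {0,1,2,…}`, one has `|∂_ext A| ≤ 6 |∂⁺_ext A|`. -/
theorem card_extBdry_le_six_card_extBdryPlus (d : ℕ) (hd : 1 ≤ d)
    (A : Set (Fin (d + 1) → ℤ)) (hfin : A.Finite) (hne : A.Nonempty)
    (hhalf : ∀ v ∈ A, 0 ≤ v (Fin.last d))
    (hconn : ConnectedIn LAdj A) :
    (extBdry A).ncard ≤ 6 * (extBdryPlus A).ncard := by
  classical
  set P := extBdryPlus A with hPdef
  set Δ := extBdry A with hΔdef
  have hPΔ : P ⊆ Δ := fun v hv => hv.1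
  have hΔfin : Δ.Finite := by
    have hball : ∀ w : Fin (d + 1) → ℤ,
        {u : Fin (d + 1) → ℤ | ∀ i, |u i - w i| ≤ 1}.Finite := by
      intro w
      apply Set.Finite.subset
        (Set.Finite.pi (fun i => Set.finite_Icc (w i - 1) (w i + 1)))
      intro u hu
      rw [Set.mem_pi]
      intro i _
      have h2 := abs_le.mp (hu i)
      rw [Set.mem_Icc]
      omega
    apply Set.Finite.subset (Set.Finite.biUnion hfin (fun w _ => hball w))
    intro v hv
    obtain ⟨w, hw, hL⟩ := hv.2.1
    exact Set.mem_biUnion hw (fun i => hL.2 i)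
  have hPfin : P.Finite := hΔfin.subset hPΔ
  have hBfin : (Δ \ P).Finite := hΔfin.diff
  have key : ∀ v, v ∈ Δ \ P → ∃ m : ℕ, 1 ≤ m ∧ up v m ∈ P :=
    fun v hv => exists_plus_above hfin hv.1 hv.2
  set mf : (Fin (d + 1) → ℤ) → ℕ :=
    fun v => if h : v ∈ Δ \ P then Nat.find (key v h) else 0 with hmf
  have hmf1 : ∀ v, ∀ _ : v ∈ Δ \ P, 1 ≤ mf v ∧ up v (mf v) ∈ P := by
    intro v h
    simp only [hmf, dif_pos h]
    exact Nat.find_spec (key v h)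
  have hmin : ∀ v, ∀ _ : v ∈ Δ \ P, ∀ j, j < mf v → ¬(1 ≤ j ∧ up v j ∈ P) := by
    intro v h j hj
    simp only [hmf, dif_pos h] at hj
    exact Nat.find_min (key v h) hj
  have hrec : ∀ v1 v2 : Fin (d + 1) → ℤ, ∀ m1 m2 : ℕ, m2 ≤ m1 → up v1 m1 = up v2 m2 →
      v2 = up v1 (m1 - m2) := by
    intro v1 v2 m1 m2 hle he
    funext i
    by_cases hi : i = Fin.last d
    · subst hi
      have h2 := congrFun he (Fin.last d)
      simp only [up_last] at h2 ⊢
      omega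
    · have h2 := congrFun he i
      rw [up_ne_last _ _ hi, up_ne_last _ _ hi] at h2
      rw [up_ne_last _ _ hi]
      omega
  have hpair : ∀ v1, ∀ _ : v1 ∈ Δ \ P, ∀ v2, ∀ _ : v2 ∈ Δ \ P,
      up v1 (mf v1) = up v2 (mf v2) → mf v2 ≤ mf v1 → mf v1 - mf v2 ≤ 1 := by
    intro v1 hv1 v2 hv2 he hle
    by_contra hgt
    push_neg at hgt
    have h2 : v2 = up v1 (mf v1 - mf v2) := hrec _ _ _ _ hle he
    rw [h2] at hv2
    obtain ⟨j, hj1, hj2, hjP⟩ :=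
      exists_plus_between (m := mf v1 - mf v2) (by omega) hv1.1 hv1.2 hv2.1 hv2.2
    exact hmin v1 hv1 j (by omega) ⟨hj1, hjP⟩
  have hcard : hBfin.toFinset.card ≤ 2 * hPfin.toFinset.card := by
    apply Finset.card_le_mul_card_image_of_maps_to
      (f := fun v => up v (mf v)) (t := hPfin.toFinset)
    · intro v hv
      rw [Set.Finite.mem_toFinset] at hv
      rw [Set.Finite.mem_toFinset]
      exact (hmf1 v hv).2
    · intro b hb
      set fib := hBfin.toFinset.filter (fun a => up a (mf a) = b) with hfibdef
      show fib.card ≤ 2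
      rcases fib.eq_empty_or_nonempty with hfe | hfne
      · simp [hfe]
      · have hmemfib : ∀ x ∈ fib, x ∈ Δ \ P ∧ up x (mf x) = b := by
          intro x hx
          have h2 := Finset.mem_filter.mp hx
          exact ⟨(Set.Finite.mem_toFinset _).mp h2.1, h2.2⟩
        have hinj : Set.InjOn mf fib := by
          intro x hx y hy hxy
          obtain ⟨hxB, hxb⟩ := hmemfib x (by simpa using hx)
          obtain ⟨hyB, hyb⟩ := hmemfib y (by simpa using hy)
          have h3 := hrec x y (mf x) (mf y) (le_of_eq hxy.symm) (hxb.trans hyb.symm)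
          rw [hxy, Nat.sub_self, up_zero] at h3
          exact h3.symm
        obtain ⟨v0, hv0fib, hv0min⟩ := Finset.exists_min_image fib mf hfne
        obtain ⟨hv0B, hv0b⟩ := hmemfib v0 hv0fib
        have hsub : fib.image mf ⊆ {mf v0, mf v0 + 1} := by
          intro k hk
          obtain ⟨x, hx, rfl⟩ := Finset.mem_image.mp hk
          obtain ⟨hxB, hxb⟩ := hmemfib x hx
          have hle : mf v0 ≤ mf x := hv0min x hx
          have hd1 : mf x - mf v0 ≤ 1 := hpair x hxB v0 hv0B (hxb.trans hv0b.symm) hle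
          simp only [Finset.mem_insert, Finset.mem_singleton]
          omega
        calc fib.card = (fib.image mf).card := (Finset.card_image_of_injOn hinj).symm
          _ ≤ ({mf v0, mf v0 + 1} : Finset ℕ).card := Finset.card_le_card hsub
          _ ≤ 2 := by
              apply le_trans (Finset.card_insert_le _ _)
              simp
  have hdecomp : (Δ \ P).ncard + P.ncard = Δ.ncard :=
    Set.ncard_diff_add_ncard_of_subset hPΔ hΔfin
  have hBP : (Δ \ P).ncard ≤ 2 * P.ncard := by
    rw [Set.ncard_eq_toFinset_card _ hBfin, Set.ncard_eq_toFinset_card _ hPfin]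
    exact hcard
  omega
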